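/- Let λ > 0 and ℓ > 0, let u(y) = exp(λ(y − ℓ)), and let x(q) = ℓ + (4/λ)·ln(q + (1 − q)·exp(−λℓ/4)) for q ∈ [0, 1]. Then there exists a constant C > 0 such that for all h ∈ (0, 1/2] and all q ∈ [h, 1 − h], the consistency error of the central difference scheme on the non-uniform grid generated by x satisfies |ψ_h(q)| ≤ C·h⁴, where ψ_h(q) := −[ (u(x(q+h)) − u(x(q)))/h₊ − (u(x(q)) − u(x(q−h)))/h₋ ] / ((h₊ + h₋)/2) + λ²·u(x(q)), h₊ = x(q+h) − x(q), h₋ = x(q) − x(q−h). Thus the second-order central difference scheme is fourth-order consistent on the equidistributed grid for the monitor function ω(y) = (u'(y))^{1/4}. -/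

import Mathlib

open Real in
set_option maxHeartbeats 2000000 in
lemma key_bound (a t s r : ℝ) (ha : 0 < a) (ht : 0 < t) (hta : a ≤ 1 - t)
    (hs : s = Real.log (1+t)) (hr : r = -Real.log (1-t)) :
    |8*(s + r)*(s*r) - ((1+t)^4 - 1) * r + (1 - (1-t)^4) * s|
    ≤ 200/a^2 * t^7 := by
  have ht1 : t < 1 := by linarith
  have h1t : 0 < 1 - t := by linarith
  have ha1 : a ≤ 1 := by linarith
  -- Taylor bounds
  have h1 := Real.abs_log_sub_add_sum_range_le (x := t) (by rw [abs_of_pos ht]; linarith) 6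
  have h2 := Real.abs_log_sub_add_sum_range_le (x := -t) (by rw [abs_neg, abs_of_pos ht]; linarith) 6
  simp [Finset.sum_range_succ, abs_of_pos ht] at h1 h2
  have hc : t^7/(1-t) ≤ t^7/a := by
    rw [div_le_div_iff₀ h1t ha]; nlinarith [pow_pos ht 7]
  obtain ⟨Sp, hSp⟩ : ∃ x : ℝ, x = t - t^2/2 + t^3/3 - t^4/4 + t^5/5 - t^6/6 := ⟨_, rfl⟩
  obtain ⟨Rp, hRp⟩ : ∃ x : ℝ, x = t + t^2/2 + t^3/3 + t^4/4 + t^5/5 + t^6/6 := ⟨_, rfl⟩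
  have hE2 : |r - Rp| ≤ t^7/a := by
    refine le_trans ?_ hc
    rw [show r - Rp = -((t + t^2/2 + t^3/3 + t^4/4 + t^5/5 + t^6/6) + Real.log (1-t)) from by
      rw [hr, hRp]; ring, abs_neg]
    refine le_of_eq_of_le ?_ h1; congr 1; ring
  have hE1 : |s - Sp| ≤ t^7/a := by
    refine le_trans ?_ hc
    rw [show s - Sp = (-t + t^2/2 - t^3/3 + t^4/4 - t^5/5 + t^6/6) + Real.log (1+t) from by
      rw [hs, hSp]; ring]
    refine le_of_eq_of_le ?_ h2; congr 1; ring
  -- crude bounds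
  have hs0 : 0 < s := by rw [hs]; exact Real.log_pos (by linarith)
  have hr0 : 0 < r := by rw [hr]; linarith [Real.log_neg h1t (by linarith : 1 - t < 1)]
  have hsu : s ≤ t := by
    rw [hs]
    have := Real.log_le_sub_one_of_pos (by linarith : (0:ℝ) < 1 + t); linarith
  have hru : r ≤ t/a := by
    have h3 := Real.log_le_sub_one_of_pos (by positivity : (0:ℝ) < (1-t)⁻¹)
    rw [Real.log_inv] at h3
    have h4 : (1-t)⁻¹ ≤ 1 + t/a := by
      rw [inv_eq_one_div, div_le_iff₀ h1t]
      have h5 : t/(1-t) ≤ t/a := by rw [div_le_div_iff₀ h1t ha]; nlinarith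
      have h7 : t/(1-t)*(1-t) = t := div_mul_cancel₀ _ h1t.ne'
      nlinarith [mul_le_mul_of_nonneg_right h5 h1t.le]
    rw [hr]; linarith
  have hru1 : r ≤ 1/a := le_trans hru (by rw [div_le_div_iff₀ ha ha]; nlinarith)
  have hSpb : |Sp| ≤ 5/2 := by rw [hSp, abs_le]; constructor <;> nlinarith [pow_le_one₀ ht.le ht1.le (n := 2), pow_le_one₀ ht.le ht1.le (n := 3), pow_le_one₀ ht.le ht1.le (n := 4), pow_le_one₀ ht.le ht1.le (n := 5), pow_le_one₀ ht.le ht1.le (n := 6)]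
  have hRpb : |Rp| ≤ 5/2 := by rw [hRp, abs_le]; constructor <;> nlinarith [pow_le_one₀ ht.le ht1.le (n := 2), pow_le_one₀ ht.le ht1.le (n := 3), pow_le_one₀ ht.le ht1.le (n := 4), pow_le_one₀ ht.le ht1.le (n := 5), pow_le_one₀ ht.le ht1.le (n := 6)]
  -- big ring identity: Taylor polynomial part + error terms
  have hident :
      8*(s + r)*(s*r) - ((1+t)^4 - 1)*r + (1 - (1-t)^4)*s
      = t^7*(16/5 - 73/135*t^2 - 83/225*t^4 - 221/225*t^6 - 968/3375*t^8 - 4/45*t^10)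
        + (8*((s-Sp)*(s+Sp)*r)
        + (8*(Sp^2*(r-Rp))
        + (8*((r-Rp)*(r+Rp)*s)
        + (8*(Rp^2*(s-Sp))
        + (-(((1+t)^4-1)*(r-Rp))
        + (1-(1-t)^4)*(s-Sp)))))) := by
    rw [hSp, hRp]; ring
  have hmono : t^7/a ≤ t^7/a^2 := by
    rw [div_le_div_iff₀ ha (by positivity)]
    nlinarith [mul_nonneg (pow_pos ht 7).le (mul_nonneg ha.le (by linarith : (0:ℝ) ≤ 1 - a))]
  have hmono1 : t^7 ≤ t^7/a^2 := by
    rw [le_div_iff₀ (by positivity)]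
    nlinarith [mul_nonneg (pow_pos ht 7).le (by nlinarith : (0:ℝ) ≤ 1 - a^2)]
  have hsSb : |s+Sp| ≤ 7/2 := by
    refine (abs_add_le _ _).trans ?_
    rw [abs_of_pos hs0]; linarith [hSpb]
  have hrb : |r| ≤ 1/a := by rw [abs_of_pos hr0]; exact hru1
  have hainv : 1 ≤ 1/a := by rw [le_div_iff₀ ha]; linarith
  have hrRb : |r+Rp| ≤ 7/2*(1/a) := by
    refine (abs_add_le _ _).trans ?_
    rw [abs_of_pos hr0]
    nlinarith [hRpb, hru1]
  have hsb : |s| ≤ 1 := by rw [abs_of_pos hs0]; linarith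
  have hN : |(1+t)^4 - 1| ≤ 15 := by
    have h16 : (1+t)^4 ≤ 16 := by
      have := pow_le_pow_left₀ (by linarith : (0:ℝ) ≤ 1+t) (by linarith : 1+t ≤ 2) 4
      norm_num at this; linarith
    have h1' : (1:ℝ) ≤ (1+t)^4 := one_le_pow₀ (by linarith)
    rw [abs_of_nonneg (by linarith)]; linarith
  have hM : |1 - (1-t)^4| ≤ 1 := by
    have h0 : (0:ℝ) ≤ (1-t)^4 := by positivity
    have h1' : (1-t)^4 ≤ 1 := pow_le_one₀ (by linarith) (by linarith)
    rw [abs_of_nonneg (by linarith)]; linarith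
  -- bounds on the individual terms
  have hb0 : |t^7*(16/5 - 73/135*t^2 - 83/225*t^4 - 221/225*t^6 - 968/3375*t^8 - 4/45*t^10)|
      ≤ 6*(t^7/a^2) := by
    have hp : |16/5 - 73/135*t^2 - 83/225*t^4 - 221/225*t^6 - 968/3375*t^8 - 4/45*t^10| ≤ 6 := by
      have hA : ∀ n : ℕ, 0 ≤ t^n ∧ t^n ≤ 1 := fun n => ⟨by positivity, pow_le_one₀ ht.le ht1.le⟩
      obtain ⟨a2, b2⟩ := hA 2; obtain ⟨a4, b4⟩ := hA 4; obtain ⟨a6, b6⟩ := hA 6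
      obtain ⟨a8, b8⟩ := hA 8; obtain ⟨a10, b10⟩ := hA 10
      rw [abs_le]; constructor <;> linarith
    calc |t^7*(16/5 - 73/135*t^2 - 83/225*t^4 - 221/225*t^6 - 968/3375*t^8 - 4/45*t^10)|
        = t^7 * |16/5 - 73/135*t^2 - 83/225*t^4 - 221/225*t^6 - 968/3375*t^8 - 4/45*t^10| := by
          rw [abs_mul, abs_of_nonneg (by positivity : (0:ℝ) ≤ t^7)]
      _ ≤ t^7 * 6 := by gcongr
      _ ≤ 6*(t^7/a^2) := by nlinarith [hmono1]
  have hb1 : |8*((s-Sp)*(s+Sp)*r)| ≤ 28*(t^7/a^2) := by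
    calc |8*((s-Sp)*(s+Sp)*r)| = 8*(|s-Sp| * |s+Sp| * |r|) := by
          rw [abs_mul, abs_mul, abs_mul, abs_of_nonneg (by norm_num : (0:ℝ) ≤ 8)]
      _ ≤ 8*((t^7/a)*(7/2)*(1/a)) := by gcongr
      _ = 28*(t^7/a^2) := by rw [sq]; ring
  have hb2 : |8*(Sp^2*(r-Rp))| ≤ 50*(t^7/a^2) := by
    calc |8*(Sp^2*(r-Rp))| = 8*(|Sp|^2*|r-Rp|) := by
          rw [abs_mul, abs_mul, abs_pow, abs_of_nonneg (by norm_num : (0:ℝ) ≤ 8)]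
      _ ≤ 8*((5/2)^2*(t^7/a)) := by gcongr
      _ ≤ 50*(t^7/a^2) := by nlinarith [hmono]
  have hb3 : |8*((r-Rp)*(r+Rp)*s)| ≤ 28*(t^7/a^2) := by
    calc |8*((r-Rp)*(r+Rp)*s)| = 8*(|r-Rp| * |r+Rp| * |s|) := by
          rw [abs_mul, abs_mul, abs_mul, abs_of_nonneg (by norm_num : (0:ℝ) ≤ 8)]
      _ ≤ 8*((t^7/a)*(7/2*(1/a))*1) := by gcongr
      _ = 28*(t^7/a^2) := by rw [sq]; ring
  have hb4 : |8*(Rp^2*(s-Sp))| ≤ 50*(t^7/a^2) := by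
    calc |8*(Rp^2*(s-Sp))| = 8*(|Rp|^2*|s-Sp|) := by
          rw [abs_mul, abs_mul, abs_pow, abs_of_nonneg (by norm_num : (0:ℝ) ≤ 8)]
      _ ≤ 8*((5/2)^2*(t^7/a)) := by gcongr
      _ ≤ 50*(t^7/a^2) := by nlinarith [hmono]
  have hb5 : |-(((1+t)^4-1)*(r-Rp))| ≤ 15*(t^7/a^2) := by
    rw [abs_neg, abs_mul]
    calc |(1+t)^4-1| * |r-Rp| ≤ 15*(t^7/a) := by gcongr
      _ ≤ 15*(t^7/a^2) := by nlinarith [hmono]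
  have hb6 : |(1-(1-t)^4)*(s-Sp)| ≤ 1*(t^7/a^2) := by
    rw [abs_mul]
    calc |1-(1-t)^4| * |s-Sp| ≤ 1*(t^7/a) := by gcongr
      _ ≤ 1*(t^7/a^2) := by nlinarith [hmono]
  have hfin : 200/a^2*t^7 = 200*(t^7/a^2) := by ring
  calc |8*(s + r)*(s*r) - ((1+t)^4 - 1)*r + (1 - (1-t)^4)*s|
      = |t^7*(16/5 - 73/135*t^2 - 83/225*t^4 - 221/225*t^6 - 968/3375*t^8 - 4/45*t^10)
        + (8*((s-Sp)*(s+Sp)*r)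
        + (8*(Sp^2*(r-Rp))
        + (8*((r-Rp)*(r+Rp)*s)
        + (8*(Rp^2*(s-Sp))
        + (-(((1+t)^4-1)*(r-Rp))
        + (1-(1-t)^4)*(s-Sp))))))| := by rw [hident]
    _ ≤ |t^7*(16/5 - 73/135*t^2 - 83/225*t^4 - 221/225*t^6 - 968/3375*t^8 - 4/45*t^10)|
        + (|8*((s-Sp)*(s+Sp)*r)|
        + (|8*(Sp^2*(r-Rp))|
        + (|8*((r-Rp)*(r+Rp)*s)|
        + (|8*(Rp^2*(s-Sp))|
        + (|-(((1+t)^4-1)*(r-Rp))|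
        + |(1-(1-t)^4)*(s-Sp)|))))) := by
          refine (abs_add_le _ _).trans (add_le_add_right ((abs_add_le _ _).trans
            (add_le_add_right ((abs_add_le _ _).trans (add_le_add_right ((abs_add_le _ _).trans
            (add_le_add_right ((abs_add_le _ _).trans (add_le_add_right (abs_add_le _ _) _)) _)) _)) _)) _)
    _ ≤ 6*(t^7/a^2) + (28*(t^7/a^2) + (50*(t^7/a^2) + (28*(t^7/a^2) + (50*(t^7/a^2)
        + (15*(t^7/a^2) + 1*(t^7/a^2)))))) := by
          exact add_le_add hb0 (add_le_add hb1 (add_le_add hb2 (add_le_add hb3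
            (add_le_add hb4 (add_le_add hb5 hb6)))))
    _ ≤ 200/a^2*t^7 := by
          have hX : 0 ≤ t^7/a^2 := by positivity
          rw [hfin]; linarith


set_option maxHeartbeats 2000000 in
/-- supraconvergence on the equidistributed grid. For
u(y) = exp(λ(y − ℓ)) and x(q) = ℓ + (4/λ)·ln(q + (1 − q)·exp(−λℓ/4)) (the grid mapping
equidistributing ω = (u')^{1/4}), the consistency error of the central difference
scheme on the non-uniform grid generated by x satisfies |ψ_h(q)| ≤ C·h⁴ uniformly for
h ∈ (0,1/2], q ∈ [h, 1−h]: the scheme is fourth-order consistent. -/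
theorem stmt_17 (lam ℓ : ℝ) (hlam : 0 < lam) (hℓ : 0 < ℓ)
    (u x : ℝ → ℝ)
    (hu : u = fun y : ℝ => Real.exp (lam * (y - ℓ)))
    (hx : x = fun q : ℝ => ℓ + 4 / lam * Real.log (q + (1 - q) * Real.exp (-(lam * ℓ) / 4)))
    (ψ : ℝ → ℝ → ℝ)
    (hψ : ψ = fun h q =>
      -(((u (x (q + h)) - u (x q)) / (x (q + h) - x q)
            - (u (x q) - u (x (q - h))) / (x q - x (q - h)))
          / (((x (q + h) - x q) + (x q - x (q - h))) / 2))
        + lam ^ 2 * u (x q)) :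
    ∃ C > 0, ∀ h ∈ Set.Ioc (0 : ℝ) (1 / 2), ∀ q ∈ Set.Icc h (1 - h),
      |ψ h q| ≤ C * h ^ 4 := by
  obtain ⟨a, ha_def⟩ : ∃ y : ℝ, y = Real.exp (-(lam * ℓ) / 4) := ⟨_, rfl⟩
  have ha0 : 0 < a := ha_def ▸ Real.exp_pos _
  have ha1 : a < 1 := by
    rw [ha_def, Real.exp_lt_one_iff]
    nlinarith
  have hb : 0 < 1 - a := by linarith
  refine ⟨34 * lam^2 * (1-a)^4 / a^2, by positivity, ?_⟩
  rintro h ⟨hh0, hh2⟩ q ⟨hq1, hq2⟩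
  -- basic grid quantities
  have hb0 : 0 < 1 - a := by linarith
  have hG0 : 0 < a + (1-a)*q := by nlinarith
  have hGh : h ≤ a + (1-a)*q := by nlinarith
  have hG1 : a + (1-a)*q ≤ 1 := by nlinarith
  have hgp0 : 0 < a + (1-a)*(q+h) := by nlinarith
  have hgp1 : a + (1-a)*(q+h) ≤ 1 := by nlinarith
  have hgm0 : a ≤ a + (1-a)*(q-h) := by nlinarith
  obtain ⟨t, ht_def⟩ : ∃ y : ℝ, y = (1-a)*h/(a + (1-a)*q) := ⟨_, rfl⟩
  have ht0 : 0 < t := by rw [ht_def]; positivity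
  have hta : a ≤ 1 - t := by
    rw [ht_def]
    rw [le_sub_iff_add_le, ← le_sub_iff_add_le', div_le_iff₀ hG0]
    nlinarith
  have ht1 : t < 1 := by linarith
  have h1t : 0 < 1 - t := by linarith
  obtain ⟨s, hs_def⟩ : ∃ y : ℝ, y = Real.log (1+t) := ⟨_, rfl⟩
  obtain ⟨r, hr_def⟩ : ∃ y : ℝ, y = -Real.log (1-t) := ⟨_, rfl⟩
  have hs0 : 0 < s := by rw [hs_def]; exact Real.log_pos (by linarith)
  have hr0 : 0 < r := by
    rw [hr_def]; linarith [Real.log_neg h1t (by linarith : 1 - t < 1)]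
  -- values of u ∘ x
  have hx' : ∀ y : ℝ, x y = ℓ + 4/lam * Real.log (a + (1-a)*y) := by
    intro y
    rw [hx, ha_def]
    have : y + (1 - y) * Real.exp (-(lam * ℓ) / 4)
        = Real.exp (-(lam * ℓ) / 4) + (1 - Real.exp (-(lam * ℓ) / 4)) * y := by ring
    simp only [this]
  have hux : ∀ y : ℝ, 0 < a + (1-a)*y → u (x y) = (a + (1-a)*y)^4 := by
    intro y hy
    rw [hu, hx']
    simp only
    rw [show lam * (ℓ + 4/lam * Real.log (a + (1-a)*y) - ℓ)
        = 4 * Real.log (a + (1-a)*y) from by field_simp; ring]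
    rw [show (4:ℝ) * Real.log (a + (1-a)*y) = Real.log ((a + (1-a)*y)^4) from by
      rw [Real.log_pow]; norm_num]
    exact Real.exp_log (by positivity)
  -- grid steps as logs
  have hgpG : a + (1-a)*(q+h) = (a + (1-a)*q) * (1+t) := by
    rw [ht_def]; field_simp; ring
  have hgmG : a + (1-a)*(q-h) = (a + (1-a)*q) * (1-t) := by
    rw [ht_def]; field_simp; ring
  have hdp : x (q+h) - x q = 4/lam * s := by
    rw [hx', hx', hgpG, Real.log_mul hG0.ne' (by linarith : (1:ℝ)+t ≠ 0), hs_def]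
    ring
  have hdm : x q - x (q-h) = 4/lam * r := by
    rw [hx', hx', hgmG, Real.log_mul hG0.ne' (by linarith : (1:ℝ)-t ≠ 0), hr_def]
    ring
  have hup : u (x (q+h)) = ((a + (1-a)*q) * (1+t))^4 := by
    rw [hux _ hgp0, hgpG]
  have hum : u (x (q-h)) = ((a + (1-a)*q) * (1-t))^4 := by
    rw [hux _ (by linarith : 0 < a + (1-a)*(q-h)), hgmG]
  have hu0 : u (x q) = (a + (1-a)*q)^4 := hux _ hG0
  -- the exact form of the consistency error
  have hsr0 : 0 < s + r := by linarith
  have hden : (0:ℝ) < 8*(s+r)*(s*r) := by positivity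
  have hpsi : ψ h q = lam^2 * (a + (1-a)*q)^4 *
      (8*(s + r)*(s*r) - ((1+t)^4 - 1) * r + (1 - (1-t)^4) * s) / (8*(s+r)*(s*r)) := by
    rw [hψ]
    simp only
    rw [hup, hum, hu0, hdp, hdm]
    field_simp
    ring
  -- assemble the bound
  have hQ := key_bound a t s r ha0 ht0 hta hs_def hr_def
  have hst : t/2 ≤ s := by
    have h3 := Real.log_le_sub_one_of_pos (by positivity : (0:ℝ) < (1+t)⁻¹)
    rw [Real.log_inv] at h3
    have h4 : (1+t)⁻¹ ≤ 1 - t/2 := by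
      rw [inv_eq_one_div, div_le_iff₀ (by linarith : (0:ℝ) < 1+t)]
      nlinarith
    rw [hs_def]; linarith
  have htr : t ≤ r := by
    have h3 := Real.log_le_sub_one_of_pos h1t
    rw [hr_def]; linarith
  have hsr : t/2*t ≤ s*r := mul_le_mul hst htr ht0.le hs0.le
  have hDb : 6*t^3 ≤ 8*(s+r)*(s*r) := by
    nlinarith [mul_le_mul (by linarith : 3*t/2 ≤ s+r) hsr (by positivity : (0:ℝ) ≤ t/2*t)
      (by linarith : (0:ℝ) ≤ s+r)]
  have hGt : (a + (1-a)*q) * t = (1-a)*h := by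
    rw [ht_def]; field_simp
  rw [hpsi, abs_div, abs_mul, abs_of_nonneg (by positivity : (0:ℝ) ≤ lam^2 * (a + (1-a)*q)^4),
    abs_of_pos hden, div_le_iff₀ hden]
  calc lam^2 * (a + (1-a)*q)^4 * |8*(s + r)*(s*r) - ((1+t)^4 - 1) * r + (1 - (1-t)^4) * s|
      ≤ lam^2 * (a + (1-a)*q)^4 * (200/a^2 * t^7) := by gcongr
    _ = (200*lam^2/a^2) * ((a + (1-a)*q) * t)^4 * t^3 := by ring
    _ = (200*lam^2/a^2) * ((1-a)*h)^4 * t^3 := by rw [hGt]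
    _ ≤ (200*lam^2/a^2) * ((1-a)*h)^4 * ((8*(s+r)*(s*r))/6) := by
        have : t^3 ≤ (8*(s+r)*(s*r))/6 := by linarith
        gcongr
    _ ≤ 34 * lam^2 * (1-a)^4 / a^2 * h^4 * (8*(s+r)*(s*r)) := by
        rw [show (200*lam^2/a^2) * ((1-a)*h)^4 * ((8*(s+r)*(s*r))/6)
            = (200/6) * (lam^2*(1-a)^4/a^2*h^4) * (8*(s+r)*(s*r)) from by ring,
          show 34 * lam^2 * (1-a)^4 / a^2 * h^4 * (8*(s+r)*(s*r))
            = 34 * (lam^2*(1-a)^4/a^2*h^4) * (8*(s+r)*(s*r)) from by ring]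
        have h1 : (0:ℝ) ≤ lam^2*(1-a)^4/a^2*h^4 := by positivity
        nlinarith [hden]
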